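/- For an i.i.d. source p on a d-letter alphabet, the probability of the δ-typical set satisfies p^{⊗n}(T_{p,δ}^n) ≥ 1 − (n+1)^d * exp(−nδ²/2), where T_{p,δ}^n is the union of all type classes T_t with ‖t̄ − p‖_1 ≤ δ. -/

import Mathlib

open Real Set

/-- F r = log r - 2(r-1)/(r+1) is monotone on (0,∞). -/
lemma aux_F_mono : MonotoneOn (fun r : ℝ => Real.log r - 2*(r-1)/(r+1)) (Set.Ioi 0) := by
  have hderiv : ∀ r ∈ Set.Ioi (0:ℝ), HasDerivAt (fun r : ℝ => Real.log r - 2*(r-1)/(r+1))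
      (1/r - 4/(r+1)^2) r := by
    intro r hr
    have hr' : (0:ℝ) < r := hr
    have hr0 : r ≠ 0 := ne_of_gt hr'
    have hr1 : r + 1 ≠ 0 := by positivity
    have h1 : HasDerivAt Real.log (1/r) r := by
      simpa [one_div] using Real.hasDerivAt_log hr0
    have h2 : HasDerivAt (fun r : ℝ => 2*(r-1)/(r+1))
        ((2*(r+1) - 2*(r-1)*1)/(r+1)^2) r := by
      refine ((((hasDerivAt_id r).sub_const 1).const_mul 2).div
        ((hasDerivAt_id r).add_const 1) hr1).congr_deriv ?_
      simp only [id]; ring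
    have := h1.sub h2
    refine this.congr_deriv ?_
    ring
  apply monotoneOn_of_deriv_nonneg (convex_Ioi 0)
  · exact ContinuousOn.sub (Real.continuousOn_log.mono (by intro x hx; simpa using ne_of_gt hx))
      (ContinuousOn.div (by fun_prop) (by fun_prop)
        (fun x hx => by have : (0:ℝ) < x := hx; positivity))
  · rw [interior_Ioi]
    intro x hx
    exact (hderiv x hx).differentiableAt.differentiableWithinAt
  · rw [interior_Ioi]
    intro x hx
    rw [(hderiv x hx).deriv]
    have hx0 : (0:ℝ) < x := hx
    have h : 1/x - 4/(x+1)^2 = (x-1)^2/(x*(x+1)^2) := by field_simp; ring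
    rw [h]; positivity

lemma aux_log_ge {r : ℝ} (hr : 1 ≤ r) : 2*(r-1)/(r+1) ≤ Real.log r := by
  have h := aux_F_mono (Set.mem_Ioi.2 one_pos) (Set.mem_Ioi.2 (lt_of_lt_of_le one_pos hr)) hr
  simp only [Real.log_one] at h
  linarith [h]

lemma aux_log_le {r : ℝ} (h0 : 0 < r) (hr : r ≤ 1) : Real.log r ≤ 2*(r-1)/(r+1) := by
  have h := aux_F_mono (Set.mem_Ioi.2 h0) (Set.mem_Ioi.2 one_pos) hr
  simp only [Real.log_one] at h
  linarith [h]

noncomputable def auxG (r : ℝ) : ℝ := r * Real.log r - r + 1 - 3*(r-1)^2/(2*(r+2))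

lemma auxG_hasDeriv {r : ℝ} (hr : 0 < r) :
    HasDerivAt auxG (Real.log r - 3*(r-1)*(r+5)/(2*(r+2)^2)) r := by
  have hr2 : (2:ℝ)*(r+2) ≠ 0 := by positivity
  have h1 : HasDerivAt (fun r : ℝ => r * Real.log r) (Real.log r + 1) r := by
    have := (hasDerivAt_id r).mul (Real.hasDerivAt_log (ne_of_gt hr))
    refine this.congr_deriv ?_
    simp [ne_of_gt hr]
  have h2 : HasDerivAt (fun r : ℝ => 3*(r-1)^2/(2*(r+2)))
      ((3*(2*(r-1)) * (2*(r+2)) - 3*(r-1)^2 * 2)/(2*(r+2))^2) r := by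
    have hnum : HasDerivAt (fun r : ℝ => 3*(r-1)^2) (3*(2*(r-1))) r := by
      simpa using (((hasDerivAt_id r).sub_const 1).pow 2).const_mul 3
    have hden : HasDerivAt (fun r : ℝ => 2*(r+2)) 2 r := by
      simpa using ((hasDerivAt_id r).add_const 2).const_mul 2
    exact hnum.div hden hr2
  have := (h1.sub (hasDerivAt_id r)).add_const 1 |>.sub h2
  refine this.congr_deriv ?_
  have hr2' : (r+2) ≠ 0 := by positivity
  field_simp
  ring

lemma auxG_nonneg {r : ℝ} (hr : 0 ≤ r) : 0 ≤ auxG r := by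
  have hG1 : auxG 1 = 0 := by simp [auxG]
  have hcont : ContinuousOn auxG (Set.Ici 0) := by
    apply ContinuousOn.sub
    · apply ContinuousOn.add
      · apply ContinuousOn.sub
        · exact (Real.continuous_mul_log).continuousOn
        · fun_prop
      · fun_prop
    · apply ContinuousOn.div (by fun_prop) (by fun_prop)
      intro x hx
      have : (0:ℝ) ≤ x := hx
      positivity
  rcases le_total r 1 with h | h
  · -- antitone on [0,1]
    have hanti : AntitoneOn auxG (Set.Icc 0 1) := by
      apply antitoneOn_of_deriv_nonpos (convex_Icc 0 1)
      · exact hcont.mono (by intro x hx; exact hx.1)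
      · rw [interior_Icc]
        intro x hx
        exact (auxG_hasDeriv hx.1).differentiableAt.differentiableWithinAt
      · rw [interior_Icc]
        intro x hx
        rw [(auxG_hasDeriv hx.1).deriv]
        have hx0 := hx.1
        have hx1 := le_of_lt hx.2
        have hlog := aux_log_le hx0 hx1
        have key : 2*(x-1)/(x+1) ≤ 3*(x-1)*(x+5)/(2*(x+2)^2) := by
          rw [div_le_div_iff₀ (by positivity) (by positivity)]
          nlinarith [mul_nonneg (sub_nonneg.2 hx1) (sq_nonneg (x-1)), sq_nonneg (x-1)]
        linarith
    have := hanti (Set.mem_Icc.2 ⟨hr, h⟩) (Set.mem_Icc.2 ⟨zero_le_one, le_refl 1⟩) h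
    linarith [this, hG1]
  · -- monotone on [1,∞)
    have hmono : MonotoneOn auxG (Set.Ici 1) := by
      apply monotoneOn_of_deriv_nonneg (convex_Ici 1)
      · exact hcont.mono (by intro x hx; exact le_trans (zero_le_one : (0:ℝ) ≤ 1) (Set.mem_Ici.1 hx))
      · rw [interior_Ici]
        intro x hx
        exact (auxG_hasDeriv (lt_trans one_pos hx)).differentiableAt.differentiableWithinAt
      · rw [interior_Ici]
        intro x hx
        have hx1 : (1:ℝ) ≤ x := le_of_lt hx
        rw [(auxG_hasDeriv (lt_of_lt_of_le one_pos hx1)).deriv]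
        have hlog := aux_log_ge hx1
        have key : 3*(x-1)*(x+5)/(2*(x+2)^2) ≤ 2*(x-1)/(x+1) := by
          rw [div_le_div_iff₀ (by positivity) (by positivity)]
          nlinarith [mul_nonneg (sub_nonneg.2 hx1) (sq_nonneg (x-1)), sq_nonneg (x-1)]
        linarith
    have := hmono (Set.mem_Ici.2 (le_refl 1)) (Set.mem_Ici.2 h) h
    linarith [this, hG1]

lemma aux_pointwise {x y : ℝ} (hx : 0 ≤ x) (hy : 0 < y) :
    3*(x-y)^2/(2*(x+2*y)) ≤ x * Real.log (x/y) - x + y := by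
  obtain ⟨r, hr0, rfl⟩ : ∃ r, 0 ≤ r ∧ x = y * r :=
    ⟨x/y, by positivity, by field_simp⟩
  have hG := auxG_nonneg hr0
  unfold auxG at hG
  have hlog : y * r / y = r := by field_simp
  rw [hlog]
  have h1 : y * r * Real.log r - y * r + y = y * (r * Real.log r - r + 1) := by ring
  have h2 : 3*(y*r-y)^2/(2*(y*r+2*y)) = y * (3*(r-1)^2/(2*(r+2))) := by
    rw [← mul_div_assoc, div_eq_div_iff (by positivity) (by positivity)]
    ring
  rw [h1, h2]
  have : 3*(r-1)^2/(2*(r+2)) ≤ r * Real.log r - r + 1 := by linarith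
  exact mul_le_mul_of_nonneg_left this (le_of_lt hy)

/-- Discrete Pinsker inequality. -/
lemma aux_pinsker {d : ℕ} (q p : Fin d → ℝ) (hq : ∀ i, 0 ≤ q i) (hp : ∀ i, 0 < p i)
    (hq1 : ∑ i, q i = 1) (hp1 : ∑ i, p i = 1) :
    (∑ i, |q i - p i|)^2 ≤ 2 * ∑ i, q i * Real.log (q i / p i) := by
  have hw : ∀ i, (0:ℝ) < 2*(q i + 2*p i)/3 := fun i => by
    have := hq i; have := hp i; positivity
  have hCS := Finset.sum_sq_le_sum_mul_sum_of_sq_eq_mul Finset.univ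
    (r := fun i => |q i - p i|)
    (f := fun i => 3*(q i - p i)^2/(2*(q i + 2*p i)))
    (g := fun i => 2*(q i + 2*p i)/3)
    (fun i _ => by have := hq i; have := hp i; positivity) (fun i _ => le_of_lt (hw i))
    (fun i _ => by
      rw [sq_abs]
      rw [div_mul_div_comm]
      rw [eq_div_iff (by have := hq i; have := hp i; positivity)]
      ring)
  have hsumw : ∑ i, 2*(q i + 2*p i)/3 = 2 := by
    rw [← Finset.sum_div, ← Finset.mul_sum]
    rw [Finset.sum_add_distrib, ← Finset.mul_sum, hq1, hp1]
    norm_num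
  rw [hsumw] at hCS
  have hterm : ∑ i, 3*(q i - p i)^2/(2*(q i + 2*p i)) ≤
      ∑ i, (q i * Real.log (q i / p i) - q i + p i) :=
    Finset.sum_le_sum fun i _ => aux_pointwise (hq i) (hp i)
  have hsum2 : ∑ i, (q i * Real.log (q i / p i) - q i + p i)
      = ∑ i, q i * Real.log (q i / p i) := by
    rw [Finset.sum_add_distrib, Finset.sum_sub_distrib, hq1, hp1]
    ring
  rw [hsum2] at hterm
  calc (∑ i, |q i - p i|)^2 ≤ (∑ i, 3*(q i - p i)^2/(2*(q i + 2*p i))) * 2 := hCS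
    _ ≤ (∑ i, q i * Real.log (q i / p i)) * 2 := by
        apply mul_le_mul_of_nonneg_right hterm (by norm_num)
    _ = 2 * ∑ i, q i * Real.log (q i / p i) := by ring

open Finset

lemma aux_total {d n : ℕ} (p : Fin d → ℝ) (hp1 : ∑ i, p i = 1) :
    ∑ x : Fin n → Fin d, ∏ j, p (x j) = 1 := by
  rw [← Fintype.sum_pow p n, hp1, one_pow]

lemma aux_prod_type {d n : ℕ} (p : Fin d → ℝ) (x : Fin n → Fin d) :
    ∏ j, p (x j) = ∏ i, p i ^ (Finset.univ.filter fun j => x j = i).card := by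
  rw [Finset.prod_comp p x]
  apply Finset.prod_subset (Finset.subset_univ _)
  intro i _ hi
  have : (Finset.univ.filter fun j => x j = i).card = 0 := by
    rw [Finset.card_eq_zero, Finset.filter_eq_empty_iff]
    intro j _ hj
    exact hi (Finset.mem_image.2 ⟨j, Finset.mem_univ j, hj⟩)
  rw [this, pow_zero]

lemma aux_sum_type {d n : ℕ} (x : Fin n → Fin d) :
    ∑ i, (Finset.univ.filter fun j => x j = i).card = n := by
  rw [← Finset.card_eq_sum_card_fiberwise (fun j _ => Finset.mem_univ (x j))]
  simp

/-- the type (letter-frequency vector) of a string. -/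
def tfun (d n : ℕ) (x : Fin n → Fin d) : Fin d → ℕ :=
  fun i => (Finset.univ.filter fun j => x j = i).card

/-- counting bound: N(τ) ∏ q^τ ≤ 1 for q a probability vector. -/
lemma aux_count {d n : ℕ} (q : Fin d → ℝ) (hq : ∀ i, 0 ≤ q i) (hq1 : ∑ i, q i = 1)
    (τ : Fin d → ℕ) :
    ((Finset.univ.filter fun x : Fin n → Fin d => tfun d n x = τ).card : ℝ) *
      ∏ i, q i ^ τ i ≤ 1 := by
  set S := Finset.univ.filter fun x : Fin n → Fin d => tfun d n x = τ with hS
  have h1 : ∀ x ∈ S, ∏ j, q (x j) = ∏ i, q i ^ τ i := by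
    intro x hx
    rw [aux_prod_type]
    have := (Finset.mem_filter.1 hx).2
    exact Finset.prod_congr rfl fun i _ => by rw [← congrFun this i]; rfl
  have h2 : (S.card : ℝ) * ∏ i, q i ^ τ i = ∑ x ∈ S, ∏ j, q (x j) := by
    rw [Finset.sum_congr rfl h1, Finset.sum_const, nsmul_eq_mul]
  rw [h2, ← aux_total q hq1]
  apply Finset.sum_le_sum_of_subset_of_nonneg (Finset.subset_univ _)
  intro x _ _
  exact Finset.prod_nonneg fun j _ => hq (x j)

/-- Probability of a bad type class. -/
lemma aux_badtype {d n : ℕ} (hn : 0 < n) (δ : ℝ) (hδ : 0 ≤ δ)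
    (p : Fin d → ℝ) (hp : ∀ i, 0 < p i) (hp1 : ∑ i, p i = 1)
    (τ : Fin d → ℕ) (hτ : ∑ i, τ i = n)
    (hbad : δ ≤ ∑ i, |(τ i : ℝ)/n - p i|) :
    ((Finset.univ.filter fun x : Fin n → Fin d => tfun d n x = τ).card : ℝ) *
      ∏ i, p i ^ τ i ≤ Real.exp (-(n : ℝ) * δ^2 / 2) := by
  have hn0 : (n : ℝ) ≠ 0 := Nat.cast_ne_zero.2 hn.ne'
  have hnpos : (0:ℝ) < n := Nat.cast_pos.2 hn
  set q : Fin d → ℝ := fun i => (τ i : ℝ)/n with hq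
  have hqnn : ∀ i, 0 ≤ q i := fun i => by positivity
  have hq1 : ∑ i, q i = 1 := by
    rw [hq, ← Finset.sum_div]
    rw [div_eq_one_iff_eq hn0]
    exact_mod_cast congrArg Nat.cast hτ
  set D := ∑ i, q i * Real.log (q i / p i) with hD
  have hpinsker := aux_pinsker q p hqnn hp hq1 hp1
  have hδ2 : δ^2 ≤ 2 * D := by
    calc δ^2 ≤ (∑ i, |q i - p i|)^2 := by
          apply pow_le_pow_left₀ hδ hbad
      _ ≤ 2 * D := hpinsker
  have hτq : ∀ i, (τ i : ℝ) = n * q i := fun i => by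
    rw [hq]; field_simp
  have hprod : ∏ i, p i ^ τ i =
      (∏ i, q i ^ τ i) * Real.exp (∑ i, -(τ i : ℝ) * Real.log (q i / p i)) := by
    rw [Real.exp_sum, ← Finset.prod_mul_distrib]
    apply Finset.prod_congr rfl
    intro i _
    rcases Nat.eq_zero_or_pos (τ i) with h0 | hpos
    · simp [h0]
    · have hqi : 0 < q i := div_pos (Nat.cast_pos.2 hpos) hnpos
      have hlog : -(τ i : ℝ) * Real.log (q i / p i) = (τ i : ℝ) * Real.log (p i / q i) := by
        rw [show p i / q i = (q i / p i)⁻¹ by rw [inv_div], Real.log_inv]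
        ring
      rw [hlog, Real.exp_nat_mul, Real.exp_log (div_pos (hp i) hqi)]
      rw [← mul_pow]
      congr 1
      field_simp
  have hsum : ∑ i, -(τ i : ℝ) * Real.log (q i / p i) = -(n : ℝ) * D := by
    rw [hD, Finset.mul_sum]
    apply Finset.sum_congr rfl
    intro i _
    rw [hτq i]
    ring
  rw [hprod, hsum, ← mul_assoc]
  calc ((Finset.univ.filter fun x : Fin n → Fin d => tfun d n x = τ).card : ℝ) *
      (∏ i, q i ^ τ i) * Real.exp (-(n : ℝ) * D)
      ≤ 1 * Real.exp (-(n : ℝ) * D) := by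
        apply mul_le_mul_of_nonneg_right (aux_count q hqnn hq1 τ) (Real.exp_nonneg _)
    _ ≤ Real.exp (-(n : ℝ) * δ^2 / 2) := by
        rw [one_mul]
        apply Real.exp_le_exp.2
        rw [div_eq_mul_inv, neg_mul, neg_mul, neg_mul, neg_le_neg_iff]
        calc (n:ℝ) * δ^2 * 2⁻¹ ≤ (n:ℝ) * (2*D) * 2⁻¹ := by
              apply mul_le_mul_of_nonneg_right
                (mul_le_mul_of_nonneg_left hδ2 (le_of_lt hnpos)) (by norm_num)
          _ = (n:ℝ) * D := by ring

lemma aux_image_card {d n : ℕ} :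
    (Finset.univ.image (tfun d n)).card ≤ (n+1)^d := by
  have hsub : Finset.univ.image (tfun d n) ⊆
      Fintype.piFinset (fun _ : Fin d => Finset.range (n+1)) := by
    intro τ hτ
    obtain ⟨x, _, rfl⟩ := Finset.mem_image.1 hτ
    rw [Fintype.mem_piFinset]
    intro i
    rw [Finset.mem_range, Nat.lt_succ_iff]
    calc (Finset.univ.filter fun j => x j = i).card ≤ Finset.univ.card :=
          Finset.card_filter_le _ _
      _ = n := by simp
  calc (Finset.univ.image (tfun d n)).card
      ≤ (Fintype.piFinset (fun _ : Fin d => Finset.range (n+1))).card :=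
        Finset.card_le_card hsub
    _ = (n+1)^d := by rw [Fintype.card_piFinset]; simp


open Finset in
/-- the δ-typical set has probability at least
`1 - (n+1)^d exp(-n δ²/2)` under the i.i.d. source `p^{⊗n}`. -/
theorem typical_set_prob (d n : ℕ) (hd : 0 < d) (hn : 0 < n)
    (δ : ℝ) (hδ : 0 < δ)
    (p : Fin d → ℝ) (hp : ∀ i, 0 < p i) (hp1 : ∑ i, p i = 1) :
    let T : Finset (Fin n → Fin d) :=
      Finset.univ.filter fun x =>
        ∑ i, |((Finset.univ.filter fun j => x j = i).card : ℝ) / n - p i| ≤ δ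
    1 - (n + 1 : ℝ) ^ d * Real.exp (-(n : ℝ) * δ ^ 2 / 2) ≤ ∑ x ∈ T, ∏ j, p (x j) := by
  intro T
  set K := Real.exp (-(n : ℝ) * δ ^ 2 / 2) with hK
  set Pr : (Fin n → Fin d) → Prop := fun x =>
      ∑ i, |((Finset.univ.filter fun j => x j = i).card : ℝ) / n - p i| ≤ δ with hPr
  have htotal : ∑ x : Fin n → Fin d, ∏ j, p (x j) = 1 := aux_total p hp1
  have hsplit := Finset.sum_filter_add_sum_filter_not Finset.univ Pr
    (fun x => ∏ j, p (x j))
  -- it suffices to bound the bad part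
  have hbound : ∑ x ∈ Finset.univ.filter (fun x => ¬ Pr x), ∏ j, p (x j)
      ≤ (n + 1 : ℝ) ^ d * K := by
    set N : (Fin d → ℕ) → ℕ := fun τ =>
      (Finset.univ.filter fun x : Fin n → Fin d => tfun d n x = τ).card with hN
    -- pointwise bound on the bad set
    have hpt : ∀ x ∈ Finset.univ.filter (fun x => ¬ Pr x),
        ∏ j, p (x j) ≤ K * (1 / (N (tfun d n x) : ℝ)) := by
      intro x hx
      have hxbad : ¬ Pr x := (Finset.mem_filter.1 hx).2
      have hbad : δ ≤ ∑ i, |((tfun d n x i : ℕ) : ℝ)/n - p i| := by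
        simp only [hPr, not_le] at hxbad
        simpa [tfun] using le_of_lt hxbad
      have hτ : ∑ i, tfun d n x i = n := aux_sum_type x
      have hbt := aux_badtype hn δ (le_of_lt hδ) p hp hp1 (tfun d n x) hτ hbad
      have hNpos : 0 < N (tfun d n x) := by
        apply Finset.card_pos.2
        exact ⟨x, Finset.mem_filter.2 ⟨Finset.mem_univ x, rfl⟩⟩
      have hNpos' : (0:ℝ) < (N (tfun d n x) : ℝ) := Nat.cast_pos.2 hNpos
      have hx2 : ∏ j, p (x j) = ∏ i, p i ^ tfun d n x i := aux_prod_type p x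
      rw [hx2, mul_one_div, le_div_iff₀ hNpos', mul_comm]
      exact hbt
    calc ∑ x ∈ Finset.univ.filter (fun x => ¬ Pr x), ∏ j, p (x j)
        ≤ ∑ x ∈ Finset.univ.filter (fun x => ¬ Pr x), K * (1 / (N (tfun d n x) : ℝ)) :=
          Finset.sum_le_sum hpt
      _ ≤ ∑ x : Fin n → Fin d, K * (1 / (N (tfun d n x) : ℝ)) := by
          apply Finset.sum_le_sum_of_subset_of_nonneg (Finset.subset_univ _)
          intro x _ _
          positivity
      _ = K * ∑ x : Fin n → Fin d, (1 / (N (tfun d n x) : ℝ)) := by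
          rw [Finset.mul_sum]
      _ = K * ∑ τ ∈ Finset.univ.image (tfun d n),
            (Finset.univ.filter fun x : Fin n → Fin d => tfun d n x = τ).card
              • (1 / (N τ : ℝ)) := by
          rw [Finset.sum_comp (fun τ => 1 / (N τ : ℝ)) (tfun d n)]
      _ = K * ∑ τ ∈ Finset.univ.image (tfun d n), (1:ℝ) := by
          congr 1
          apply Finset.sum_congr rfl
          intro τ hτ
          obtain ⟨x, _, rfl⟩ := Finset.mem_image.1 hτ
          have hNpos : 0 < N (tfun d n x) := by
            apply Finset.card_pos.2
            exact ⟨x, Finset.mem_filter.2 ⟨Finset.mem_univ x, rfl⟩⟩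
          rw [nsmul_eq_mul]
          rw [hN]
          field_simp
      _ ≤ (n + 1 : ℝ) ^ d * K := by
          rw [Finset.sum_const, nsmul_eq_mul, mul_one, mul_comm]
          apply mul_le_mul_of_nonneg_right _ (Real.exp_nonneg _)
          have := aux_image_card (d := d) (n := n)
          calc ((Finset.univ.image (tfun d n)).card : ℝ) ≤ (((n+1)^d : ℕ) : ℝ) := by
                exact_mod_cast this
            _ = (n + 1 : ℝ) ^ d := by push_cast; ring
  have hT : T = Finset.univ.filter Pr := rfl
  rw [hT]
  linarith [hsplit, htotal, hbound]
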